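/- Fix d ≥ 1. Let A_1 = B_1 = A_2 = B_2 = Fin d and P = F = Fin d × Fin 2. Define the vector v indexed by P × A_1 × B_1 × A_2 × B_2 × F by v((m,c),a_1,b_1,a_2,b_2,(n,c')) = [c = 0 and c' = 0 and a_1 = m and a_2 = b_1 and n = b_2] + [c = 1 and c' = 1 and b_2 = m and b_1 = a_2 and a_1 = n] (Iverson brackets), and let R be the rank-one PSD matrix with entries R(u,u') = v(u)·conj(v(u')) (the Choi operator of the flippable quantum SWITCH). Then for every pair of bistochastic channel Choi operators C_1 (indexed by A_1 × B_1) and C_2 (indexed by A_2 × B_2), the matrix W indexed by P × F with entries W((p,f),(p',f')) = Σ R((p,a_1,b_1,a_2,b_2,f),(p',a_1',b_1',a_2',b_2',f'))·C_1((a_1,b_1),(a_1',b_1'))·C_2((a_2,b_2),(a_2',b_2')) (sum over all primed and unprimed a,b indices) is positive semidefinite and satisfies Tr_F[W] = 1_P; that is, W is the Choi operator of a quantum channel from P to F. -/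

import Mathlib

open Matrix ComplexOrder

/-- The vector defining the flippable quantum SWITCH: for
`u = ((m,c), a1, b1, a2, b2, (n,c'))`,
`v u = [c = 0 ∧ c' = 0 ∧ a1 = m ∧ a2 = b1 ∧ n = b2] + [c = 1 ∧ c' = 1 ∧ b2 = m ∧ b1 = a2 ∧ a1 = n]`. -/
noncomputable def flipSwitchVec (d : ℕ) :
    ((Fin d × Fin 2) × Fin d × Fin d × Fin d × Fin d × (Fin d × Fin 2)) → ℂ :=
  fun u =>
    (if u.1.2 = 0 ∧ u.2.2.2.2.2.2 = 0 ∧ u.2.1 = u.1.1 ∧ u.2.2.2.1 = u.2.2.1 ∧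
        u.2.2.2.2.2.1 = u.2.2.2.2.1 then 1 else 0) +
    (if u.1.2 = 1 ∧ u.2.2.2.2.2.2 = 1 ∧ u.2.2.2.2.1 = u.1.1 ∧ u.2.2.1 = u.2.2.2.1 ∧
        u.2.1 = u.2.2.2.2.2.1 then 1 else 0)

/-- The Choi operator of the flippable quantum SWITCH. -/
noncomputable def flipSwitchChoi (d : ℕ) :
    Matrix ((Fin d × Fin 2) × Fin d × Fin d × Fin d × Fin d × (Fin d × Fin 2))
      ((Fin d × Fin 2) × Fin d × Fin d × Fin d × Fin d × (Fin d × Fin 2)) ℂ :=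
  Matrix.of fun u u' => flipSwitchVec d u * (starRingEnd ℂ) (flipSwitchVec d u')

/-- The result `W` of plugging two channels `C1`, `C2` into a bipartite supermap `R`. -/
noncomputable def link2PF {P A1 B1 A2 B2 F : Type*}
    [Fintype A1] [Fintype B1] [Fintype A2] [Fintype B2]
    (R : Matrix (P × A1 × B1 × A2 × B2 × F) (P × A1 × B1 × A2 × B2 × F) ℂ)
    (C1 : Matrix (A1 × B1) (A1 × B1) ℂ) (C2 : Matrix (A2 × B2) (A2 × B2) ℂ) :
    Matrix (P × F) (P × F) ℂ :=
  Matrix.of fun (u u' : P × F) =>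
    ∑ a1 : A1, ∑ b1 : B1, ∑ a2 : A2, ∑ b2 : B2,
    ∑ a1' : A1, ∑ b1' : B1, ∑ a2' : A2, ∑ b2' : B2,
      R (u.1, a1, b1, a2, b2, u.2) (u'.1, a1', b1', a2', b2', u'.2) *
        C1 (a1, b1) (a1', b1') * C2 (a2, b2) (a2', b2')

set_option maxHeartbeats 1000000 in
private lemma kron_psd' {n m : Type*} [Fintype n] [Fintype m]
    {A : Matrix n n ℂ} {B : Matrix m m ℂ} (hA : A.PosSemidef) (hB : B.PosSemidef) :
    (Matrix.kroneckerMap (· * ·) A B).PosSemidef := by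
  obtain ⟨A', rfl⟩ : ∃ A' : Matrix n n ℂ, A = A'ᴴ * A' := by
    classical
    open scoped MatrixOrder in exact CStarAlgebra.nonneg_iff_eq_star_mul_self.mp hA.nonneg
  obtain ⟨B', rfl⟩ : ∃ B' : Matrix m m ℂ, B = B'ᴴ * B' := by
    classical
    open scoped MatrixOrder in exact CStarAlgebra.nonneg_iff_eq_star_mul_self.mp hB.nonneg
  rw [Matrix.mul_kronecker_mul]
  have h : (Matrix.kroneckerMap (· * ·) A'ᴴ B'ᴴ) = (Matrix.kroneckerMap (· * ·) A' B')ᴴ := by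
    ext ⟨i, j⟩ ⟨k, l⟩
    simp [conjTranspose_apply, kroneckerMap_apply]
  rw [h]
  exact posSemidef_conjTranspose_mul_self _

/-- The isometry-like matrix built from `flipSwitchVec`. -/
noncomputable def switchN (d : ℕ) :
    Matrix ((Fin d × Fin 2) × (Fin d × Fin 2)) ((Fin d × Fin d) × (Fin d × Fin d)) ℂ :=
  Matrix.of fun u x => flipSwitchVec d (u.1, x.1.1, x.1.2, x.2.1, x.2.2, u.2)

set_option maxHeartbeats 1000000 in
private lemma sandwich' (d : ℕ) (C1 C2 : Matrix (Fin d × Fin d) (Fin d × Fin d) ℂ) :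
    link2PF (flipSwitchChoi d) C1 C2 =
      switchN d * (Matrix.kroneckerMap (· * ·) C1 C2) * (switchN d)ᴴ := by
  rw [Matrix.mul_assoc]
  ext u u'
  simp only [link2PF, flipSwitchChoi, switchN, Matrix.mul_apply, Matrix.of_apply,
    conjTranspose_apply, kroneckerMap_apply, Fintype.sum_prod_type, Finset.mul_sum,
    Finset.sum_mul, starRingEnd_apply]
  refine Finset.sum_congr rfl fun a1 _ => Finset.sum_congr rfl fun b1 _ =>
    Finset.sum_congr rfl fun a2 _ => Finset.sum_congr rfl fun b2 _ =>
    Finset.sum_congr rfl fun a1' _ => Finset.sum_congr rfl fun b1' _ =>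
    Finset.sum_congr rfl fun a2' _ => Finset.sum_congr rfl fun b2' _ => ?_
  ring

set_option maxHeartbeats 1000000 in
/-- the flippable quantum SWITCH maps every pair of bistochastic channel
Choi operators `C1`, `C2` to the Choi operator of a quantum channel from
`P = Fin d × Fin 2` to `F = Fin d × Fin 2`: `W` is PSD and `Tr_F[W] = 1_P`. -/
theorem stmt9 (d : ℕ) (hd : 1 ≤ d)
    (C1 : Matrix (Fin d × Fin d) (Fin d × Fin d) ℂ) (hC1 : C1.PosSemidef)
    (hC1B : ∀ a a', (∑ b : Fin d, C1 (a, b) (a', b)) = if a = a' then 1 else 0)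
    (hC1A : ∀ b b', (∑ a : Fin d, C1 (a, b) (a, b')) = if b = b' then 1 else 0)
    (C2 : Matrix (Fin d × Fin d) (Fin d × Fin d) ℂ) (hC2 : C2.PosSemidef)
    (hC2B : ∀ a a', (∑ b : Fin d, C2 (a, b) (a', b)) = if a = a' then 1 else 0)
    (hC2A : ∀ b b', (∑ a : Fin d, C2 (a, b) (a, b')) = if b = b' then 1 else 0) :
    (link2PF (flipSwitchChoi d) C1 C2).PosSemidef ∧
    (∀ p p' : Fin d × Fin 2,
      (∑ f : Fin d × Fin 2, link2PF (flipSwitchChoi d) C1 C2 (p, f) (p', f)) =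
        if p = p' then 1 else 0) := by
  constructor
  · rw [sandwich' d C1 C2]
    exact (kron_psd' hC1 hC2).mul_mul_conjTranspose_same (switchN d)
  rintro ⟨m, c⟩ ⟨m', c'⟩
  fin_cases c <;> fin_cases c'
  · simp (config := { maxSteps := 10000000 }) only [link2PF, flipSwitchChoi, flipSwitchVec, Matrix.of_apply, Fintype.sum_prod_type,
      Fin.sum_univ_two, Prod.mk.injEq, Fin.isValue, Fin.zero_eta, zero_ne_one, one_ne_zero,
      false_and, if_false, and_true, true_and, add_zero, zero_add, _root_.map_zero, _root_.map_one,
      apply_ite (starRingEnd ℂ), mul_zero, zero_mul, mul_one, one_mul]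
    simp only [Finset.sum_const_zero, add_zero, ite_and, mul_ite, ite_mul, mul_zero, zero_mul,
      one_mul, mul_one, Finset.sum_ite_irrel, Finset.sum_ite_eq, Finset.sum_ite_eq', Finset.mem_univ, if_true, Finset.sum_const_zero]
    rw [Finset.sum_comm]
    refine (Finset.sum_congr rfl fun x1 _ => Finset.sum_comm).trans ?_
    simp_rw [← Finset.mul_sum, hC2B, mul_ite, mul_one, mul_zero, Finset.sum_ite_eq,
      Finset.mem_univ, if_true]
    exact hC1B m m'
  · simp (config := { maxSteps := 10000000 }) only [link2PF, flipSwitchChoi, flipSwitchVec, Matrix.of_apply, Fintype.sum_prod_type,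
      Fin.sum_univ_two, Prod.mk.injEq, Fin.isValue, Fin.zero_eta, Fin.mk_one, zero_ne_one,
      one_ne_zero, false_and, and_false, if_false, and_true, true_and, add_zero, zero_add,
      _root_.map_zero, _root_.map_one, apply_ite (starRingEnd ℂ), mul_zero, zero_mul,
      mul_one, one_mul, Finset.sum_const_zero]
  · simp (config := { maxSteps := 10000000 }) only [link2PF, flipSwitchChoi, flipSwitchVec, Matrix.of_apply, Fintype.sum_prod_type,
      Fin.sum_univ_two, Prod.mk.injEq, Fin.isValue, Fin.zero_eta, Fin.mk_one, zero_ne_one,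
      one_ne_zero, false_and, and_false, if_false, and_true, true_and, add_zero, zero_add,
      _root_.map_zero, _root_.map_one, apply_ite (starRingEnd ℂ), mul_zero, zero_mul,
      mul_one, one_mul, Finset.sum_const_zero]
  · simp only [link2PF, flipSwitchChoi, flipSwitchVec, Matrix.of_apply, Fintype.sum_prod_type,
      Fin.sum_univ_two, Prod.mk.injEq, Fin.isValue, Fin.zero_eta, Fin.mk_one, zero_ne_one,
      one_ne_zero, false_and, and_false, if_false, and_true, true_and, add_zero, zero_add,
      _root_.map_zero, _root_.map_one, apply_ite (starRingEnd ℂ), mul_zero, zero_mul,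
      mul_one, one_mul, ite_and, mul_ite, ite_mul, Finset.sum_ite_irrel, Finset.sum_ite_eq,
      Finset.sum_ite_eq', Finset.mem_univ, if_true, Finset.sum_const_zero]
    rw [Finset.sum_comm]
    refine (Finset.sum_congr rfl fun x1 _ => Finset.sum_comm).trans ?_
    simp_rw [← Finset.sum_mul, hC1A, ite_mul, one_mul, zero_mul, Finset.sum_ite_eq,
      Finset.mem_univ, if_true]
    exact hC2A m m'
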